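/- Let BS = <(w_1,q_1),…,(w_m,q_m)> be a blocking scheme and define per-level costs q̂_i by q̂_i = q_j if level i is the first level of block j and q̂_i = 0 otherwise. Then for any prefix tree T of height h, the decode time Δ(T) = Σ_c freq(c)·Δ_T(c) equals Σ_{ℓ=0}^{h−1} q̂_{ℓ+1} · P_{2·i_ℓ − i_{ℓ+1}}, where P is the prefix sum array of frequencies sorted consistently with leaf depths and i_ℓ is the number of internal nodes at depth ≥ ℓ. -/

import Mathlib

/-- A full binary tree: every node is a leaf or has exactly two children. -/
inductive FBT where
  | leaf : FBT
  | node : FBT → FBT → FBT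

namespace FBT

/-- Multiset of depths of the leaves (root at depth 0). -/
def leafDepths : FBT → Multiset ℕ
  | leaf => {0}
  | node l r => (l.leafDepths + r.leafDepths).map (· + 1)

/-- Multiset of depths of the internal nodes (root at depth 0). -/
def internalDepths : FBT → Multiset ℕ
  | leaf => 0
  | node l r => 0 ::ₘ (l.internalDepths + r.internalDepths).map (· + 1)

/-- Number of leaves. -/
def numLeaves (t : FBT) : ℕ := Multiset.card t.leafDepths

/-- Height = maximum leaf depth. -/
def height : FBT → ℕ
  | leaf => 0
  | node l r => max l.height r.height + 1

/-- `iAt t ℓ` = number of internal nodes at depth ≥ ℓ. -/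
def iAt (t : FBT) (ℓ : ℕ) : ℕ :=
  Multiset.card (t.internalDepths.filter (fun d => ℓ ≤ d))

end FBT

/-- For a blocking scheme `<(w 1, q 1), …, (w m, q m)>`, the per-level cost `q̂ i`:
`q̂ i = q j` if level `i` (1-indexed) is the first level of block `j`
(i.e. `i = 1 + w 1 + ⋯ + w (j-1)`), and `q̂ i = 0` otherwise. -/
def qhatOf (m : ℕ) (w q : ℕ → ℕ) (i : ℕ) : ℕ :=
  ∑ j ∈ Finset.Icc 1 m, if i = 1 + ∑ s ∈ Finset.Icc 1 (j - 1), w s then q j else 0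

namespace FBT

lemma depth_le_height (t : FBT) : ∀ d ∈ t.leafDepths, d ≤ t.height := by
  induction t with
  | leaf => simp [leafDepths, height]
  | node l r ihl ihr =>
    intro d hd
    simp only [leafDepths, Multiset.mem_map, Multiset.mem_add] at hd
    obtain ⟨e, he | he, rfl⟩ := hd
    · exact Nat.succ_le_succ ((ihl e he).trans (le_max_left _ _))
    · exact Nat.succ_le_succ ((ihr e he).trans (le_max_right _ _))

lemma numLeaves_eq (t : FBT) : t.numLeaves = Multiset.card t.internalDepths + 1 := by
  induction t with
  | leaf => simp [numLeaves, leafDepths, internalDepths]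
  | node l r ihl ihr =>
    simp only [numLeaves, leafDepths, internalDepths, Multiset.card_map, Multiset.card_add,
      Multiset.card_cons] at *
    omega

/-- number of leaves at depth ≥ k -/
def lAt (t : FBT) (k : ℕ) : ℕ :=
  Multiset.card (t.leafDepths.filter (fun d => k ≤ d))

lemma card_filter_map_succ (s : Multiset ℕ) (k : ℕ) :
    Multiset.card ((s.map (· + 1)).filter (fun d => k + 1 ≤ d)) =
      Multiset.card (s.filter (fun d => k ≤ d)) := by
  rw [← Multiset.countP_eq_card_filter, ← Multiset.countP_eq_card_filter,
    Multiset.countP_map, Multiset.countP_eq_card_filter]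
  congr 1
  exact Multiset.filter_congr (fun a _ => by constructor <;> omega)

lemma lAt_node (l r : FBT) (k : ℕ) : (node l r).lAt (k + 1) = l.lAt k + r.lAt k := by
  simp only [lAt, leafDepths]
  rw [card_filter_map_succ, Multiset.filter_add, Multiset.card_add]

lemma lAt_zero (t : FBT) : t.lAt 0 = t.numLeaves := by
  simp only [lAt, numLeaves]
  rw [Multiset.filter_eq_self.2 (fun a _ => Nat.zero_le a)]

lemma iAt_node_succ (l r : FBT) (k : ℕ) :
    (node l r).iAt (k + 1) = l.iAt k + r.iAt k := by
  simp only [iAt, internalDepths]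
  rw [Multiset.filter_cons_of_neg _ (by omega), card_filter_map_succ,
    Multiset.filter_add, Multiset.card_add]

lemma iAt_zero (t : FBT) : t.iAt 0 = Multiset.card t.internalDepths := by
  simp only [iAt]
  rw [Multiset.filter_eq_self.2 (fun a _ => Nat.zero_le a)]

lemma iAt_succ_le (t : FBT) (ℓ : ℕ) : t.iAt (ℓ + 1) ≤ t.iAt ℓ :=
  Multiset.card_le_card (Multiset.monotone_filter_right _ (fun b h => by omega))

lemma key_count (t : FBT) (ℓ : ℕ) : t.lAt (ℓ + 1) = 2 * t.iAt ℓ - t.iAt (ℓ + 1) := by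
  induction t generalizing ℓ with
  | leaf =>
    simp only [lAt, leafDepths, iAt, internalDepths]
    rw [show ({0} : Multiset ℕ) = 0 ::ₘ 0 from rfl, Multiset.filter_cons_of_neg _ (by omega)]
    simp
  | node l r ihl ihr =>
    cases ℓ with
    | zero =>
      have hl := numLeaves_eq l
      have hr := numLeaves_eq r
      rw [lAt_node, lAt_zero, lAt_zero, iAt_node_succ, iAt_zero, iAt_zero, iAt_zero]
      simp only [internalDepths, Multiset.card_cons, Multiset.card_map, Multiset.card_add]
      omega
    | succ k =>
      have h1 := iAt_succ_le l k
      have h2 := iAt_succ_le r k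
      have h3 := iAt_succ_le l (k + 1)
      have h4 := iAt_succ_le r (k + 1)
      rw [lAt_node, ihl, ihr, iAt_node_succ, iAt_node_succ]
      omega

end FBT

lemma sum_Icc_one_aux (d : ℕ) (h : ℕ → ℕ) :
    ∑ j ∈ Finset.Icc 1 d, h j = ∑ ℓ ∈ Finset.range d, h (ℓ + 1) := by
  induction d with
  | zero => simp
  | succ n ih => rw [Finset.sum_Icc_succ_top (by omega), ih, Finset.sum_range_succ]

lemma sum_ite_sorted_aux (c : ℕ) : ∀ (L : List ℕ) (g : ℕ → ℕ), L.Pairwise (· ≥ ·) →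
    ∑ i ∈ Finset.range L.length, (if c ≤ L.getD i 0 then g i else 0)
      = ∑ i ∈ Finset.range (L.countP (fun d => c ≤ d)), g i := by
  intro L
  induction L with
  | nil => simp
  | cons a tl ih =>
    intro g hs
    rw [List.pairwise_cons] at hs
    obtain ⟨ha, hs⟩ := hs
    simp only [List.length_cons, List.countP_cons]
    rw [Finset.sum_range_succ']
    simp only [List.getD_cons_zero, List.getD_cons_succ]
    by_cases h : c ≤ a
    · simp only [if_pos h, decide_eq_true_eq, h, if_true]
      rw [ih (fun i => g (i + 1)) hs, ← Finset.sum_range_succ']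
    · simp only [if_neg h, decide_eq_true_eq, h, if_false, add_zero]
      have hz : tl.countP (fun d => decide (c ≤ d)) = 0 := by
        rw [List.countP_eq_zero]
        intro b hb
        simp only [decide_eq_true_eq]
        exact fun hc => h (hc.trans (ha b hb))
      rw [hz]
      simp only [Finset.range_zero, Finset.sum_empty]
      apply Finset.sum_eq_zero
      intro i hi
      rw [if_neg]
      intro hc
      rw [List.getD_eq_getElem tl 0 (Finset.mem_range.1 hi)] at hc
      exact h (hc.trans (ha _ (tl.getElem_mem _)))

/-- For any prefix tree `t` of height `h`, the decode time
`Δ(T) = Σ_c freq(c)·Δ_T(c)` (with `Δ_T(c) = Σ_{i ≤ d_T(c)} q̂ i`) equals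
`Σ_{ℓ=0}^{h−1} q̂_{ℓ+1} · P_{2·i_ℓ − i_{ℓ+1}}`, where `P` is the prefix sum array of the
frequencies ordered consistently with the leaf depths (frequency `f 1` paired with the
deepest leaf) and `i_ℓ` is the number of internal nodes at depth ≥ ℓ. -/
theorem stmt_4 (m : ℕ) (w q : ℕ → ℕ) (t : FBT) (f : ℕ → ℕ) (ds : List ℕ)
    (hds : ds = (Multiset.sort t.leafDepths (· ≤ ·)).reverse) :
    (∑ i ∈ Finset.range t.numLeaves,
        f (i + 1) * ∑ j ∈ Finset.Icc 1 (ds.getD i 0), qhatOf m w q j) =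
      ∑ ℓ ∈ Finset.range t.height,
        qhatOf m w q (ℓ + 1) *
          ∑ j ∈ Finset.Icc 1 (2 * t.iAt ℓ - t.iAt (ℓ + 1)), f j := by
  have hcoe : (ds : Multiset ℕ) = t.leafDepths := by
    rw [hds, Multiset.coe_reverse, Multiset.sort_eq]
  have hlen : ds.length = t.numLeaves := by
    have := congrArg Multiset.card hcoe
    simpa [FBT.numLeaves] using this
  have hsorted : ds.Pairwise (· ≥ ·) := by
    rw [hds]
    exact List.pairwise_reverse.mpr ((Multiset.pairwise_sort _ (· ≤ ·)).imp fun h => h)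
  have hmem : ∀ i < t.numLeaves, ds.getD i 0 ≤ t.height := by
    intro i hi
    have hi' : i < ds.length := by omega
    rw [List.getD_eq_getElem ds 0 hi']
    apply FBT.depth_le_height
    rw [← hcoe]
    exact List.getElem_mem hi'
  have step1 : ∀ i < t.numLeaves,
      f (i + 1) * ∑ j ∈ Finset.Icc 1 (ds.getD i 0), qhatOf m w q j
        = ∑ ℓ ∈ Finset.range t.height,
            (if ℓ + 1 ≤ ds.getD i 0 then f (i + 1) * qhatOf m w q (ℓ + 1) else 0) := by
    intro i hi
    rw [sum_Icc_one_aux]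
    have hsub : Finset.range (ds.getD i 0) =
        (Finset.range t.height).filter (fun ℓ => ℓ + 1 ≤ ds.getD i 0) := by
      ext x
      simp only [Finset.mem_range, Finset.mem_filter]
      have := hmem i hi
      omega
    rw [Finset.mul_sum, hsub, Finset.sum_filter]
  rw [Finset.sum_congr rfl (fun i hi => step1 i (Finset.mem_range.1 hi)), Finset.sum_comm]
  apply Finset.sum_congr rfl
  intro ℓ _
  have hcnt : ds.countP (fun d => ℓ + 1 ≤ d) = 2 * t.iAt ℓ - t.iAt (ℓ + 1) := by
    rw [← FBT.key_count]
    have : ds.countP (fun d => ℓ + 1 ≤ d)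
        = Multiset.countP (fun d => ℓ + 1 ≤ d) (ds : Multiset ℕ) := by
      simp [Multiset.coe_countP]
    rw [this, hcoe, Multiset.countP_eq_card_filter]
    rfl
  rw [← hlen, sum_ite_sorted_aux _ ds _ hsorted, hcnt, sum_Icc_one_aux, Finset.mul_sum]
  apply Finset.sum_congr rfl
  intro i _
  ring
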